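/- arXiv:1301.1518 — 2 statements merged into one kernel-verified Lean document; each statement's English description precedes it below -/
import Mathlib

section
/- (Additive Hochster formula) For every p ≥ 0 there is an isomorphism of abelian groups H^p(T(K)) ≅ ⊕_{ω ⊆ [m]} H̃^{p−1}(K_ω). -/
/-!
STATEMENT 7 (Additive Hochster formula): for every `p ≥ 0`,
`H^p(T(K)) ≅ ⊕_{ω ⊆ [m]} H̃^{p−1}(K_ω)` as abelian groups.

Indexing convention: the piece of index `p` of the reduced cochain complex of `K_ω`
below has basis the simplices of `K_ω` of cardinality `p`, i.e. it is `C̃^{p−1}(K_ω)`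
(the empty simplex sits in reduced degree `−1`), so its cohomology at index `p` is
`H̃^{p−1}(K_ω)`.
-/

def TB {m : ℕ} (K : Finset (Finset (Fin m))) (p : ℕ) : Type :=
  {x : Finset (Fin m) × Finset (Fin m) // x.1 ∈ K ∧ Disjoint x.1 x.2 ∧ x.1.card = p}

noncomputable def dTaux {m : ℕ} (K : Finset (Finset (Fin m))) (p : ℕ) (b : TB K p) :
    (TB K (p + 1) →₀ ℤ) :=
  ∑ i ∈ b.1.2.attach,
    if h : insert i.1 b.1.1 ∈ K then
      Finsupp.single
        ⟨(insert i.1 b.1.1, b.1.2.erase i.1),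
          h,
          Finset.disjoint_insert_left.mpr
            ⟨Finset.notMem_erase _ _, b.2.2.1.mono_right (Finset.erase_subset _ _)⟩,
          by
            rw [Finset.card_insert_of_notMem (Finset.disjoint_right.mp b.2.2.1 i.2), b.2.2.2]⟩
        ((-1 : ℤ) ^ (b.1.1.filter (fun j => j < i.1)).card)
    else 0

noncomputable def dT {m : ℕ} (K : Finset (Finset (Fin m))) (p : ℕ) :
    (TB K p →₀ ℤ) →ₗ[ℤ] (TB K (p + 1) →₀ ℤ) :=
  Finsupp.lift _ ℤ _ (dTaux K p)

/-- Basis of `C̃^{p−1}(K_ω)`: the simplices of `K_ω = {s ∩ ω : s ∈ K}` of cardinality `p`. -/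
def CtB {m : ℕ} (K : Finset (Finset (Fin m))) (ω : Finset (Fin m)) (p : ℕ) : Type :=
  {σ : Finset (Fin m) // (∃ s ∈ K, s ∩ ω = σ) ∧ σ.card = p}

open Classical in
noncomputable def dCtaux {m : ℕ} (K : Finset (Finset (Fin m))) (ω : Finset (Fin m)) (p : ℕ)
    (b : CtB K ω p) : (CtB K ω (p + 1) →₀ ℤ) :=
  ∑ i ∈ (ω \ b.1).attach,
    if h : ∃ s ∈ K, s ∩ ω = insert i.1 b.1 then
      Finsupp.single
        ⟨insert i.1 b.1, h,
          by
            rw [Finset.card_insert_of_notMem (Finset.mem_sdiff.mp i.2).2, b.2.2]⟩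
        ((-1 : ℤ) ^ (b.1.filter (fun j => j < i.1)).card)
    else 0

/-- The reduced simplicial coboundary `δ : C̃^{p−1}(K_ω) → C̃^{p}(K_ω)`. -/
noncomputable def dCt {m : ℕ} (K : Finset (Finset (Fin m))) (ω : Finset (Fin m)) (p : ℕ) :
    (CtB K ω p →₀ ℤ) →ₗ[ℤ] (CtB K ω (p + 1) →₀ ℤ) :=
  Finsupp.lift _ ℤ _ (dCtaux K ω p)

def prevRange {M : ℕ → Type} [∀ p, AddCommGroup (M p)] [∀ p, Module ℤ (M p)]
    (d : ∀ p, M p →ₗ[ℤ] M (p + 1)) : ∀ p : ℕ, AddSubgroup (M p)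
  | 0 => ⊥
  | p + 1 => AddMonoidHom.range (d p).toAddMonoidHom

abbrev Hgrp {M : ℕ → Type} [∀ p, AddCommGroup (M p)] [∀ p, Module ℤ (M p)]
    (d : ∀ p, M p →ₗ[ℤ] M (p + 1)) (p : ℕ) : Type :=
  (d p).toAddMonoidHom.ker ⧸ (prevRange d p).addSubgroupOf (d p).toAddMonoidHom.ker

theorem Hgrp_congr {M M' : ℕ → Type} [∀ p, AddCommGroup (M p)] [∀ p, Module ℤ (M p)]
    [∀ p, AddCommGroup (M' p)] [∀ p, Module ℤ (M' p)]
    (dM : ∀ p, M p →ₗ[ℤ] M (p+1)) (dM' : ∀ p, M' p →ₗ[ℤ] M' (p+1))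
    (e : ∀ p, M p ≃ₗ[ℤ] M' p)
    (hcomm : ∀ p x, e (p+1) (dM p x) = dM' p (e p x)) (p : ℕ) :
    Nonempty (Hgrp dM p ≃+ Hgrp dM' p) := by
  set ea : M p ≃+ M' p := (e p).toAddEquiv with hea
  have eaval : ∀ x : M p, ea x = e p x := fun _ => rfl
  have hker : ∀ x : M p, x ∈ (dM p).toAddMonoidHom.ker ↔
      ea x ∈ (dM' p).toAddMonoidHom.ker := by
    intro x
    simp only [AddMonoidHom.mem_ker, LinearMap.toAddMonoidHom_coe, eaval, ← hcomm]
    constructor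
    · intro h; rw [h, map_zero]
    · intro h; exact (e (p+1)).injective (by rw [h, map_zero])
  have hrange : ∀ q (x : M q), x ∈ prevRange dM q ↔ e q x ∈ prevRange dM' q := by
    intro q x
    match q with
    | 0 =>
      show x ∈ (⊥ : AddSubgroup _) ↔ e 0 x ∈ (⊥ : AddSubgroup _)
      simp only [AddSubgroup.mem_bot]
      constructor
      · intro h; rw [h, map_zero]
      · intro h; exact (e 0).injective (by rw [h, map_zero])
    | q + 1 =>
      show x ∈ AddMonoidHom.range (dM q).toAddMonoidHom ↔
        e (q+1) x ∈ AddMonoidHom.range (dM' q).toAddMonoidHom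
      constructor
      · rintro ⟨a, rfl⟩
        exact ⟨e q a, by simp only [LinearMap.toAddMonoidHom_coe, hcomm]⟩
      · rintro ⟨a, ha⟩
        refine ⟨(e q).symm a, ?_⟩
        apply (e (q+1)).injective
        simp only [LinearMap.toAddMonoidHom_coe] at ha ⊢
        rw [hcomm q, LinearEquiv.apply_symm_apply]
        exact ha
  have hkerEq : ((dM p).toAddMonoidHom.ker.map ea.toAddMonoidHom) =
      (dM' p).toAddMonoidHom.ker := by
    ext y
    rw [AddSubgroup.mem_map]
    constructor
    · rintro ⟨x, hx, rfl⟩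
      exact (hker x).mp hx
    · intro hy
      exact ⟨ea.symm y, (hker _).mpr (by simpa using hy), ea.apply_symm_apply y⟩
  set eker : ((dM p).toAddMonoidHom.ker : AddSubgroup (M p)) ≃+
      ((dM' p).toAddMonoidHom.ker : AddSubgroup (M' p)) :=
    (ea.addSubgroupMap _).trans (AddEquiv.addSubgroupCongr hkerEq) with heker
  have ekerval : ∀ x : (dM p).toAddMonoidHom.ker, (eker x : M' p) = ea x.1 := fun _ => rfl
  have ekerval' : ∀ x : (dM p).toAddMonoidHom.ker,
      ((eker.toAddMonoidHom x : (dM' p).toAddMonoidHom.ker) : M' p) = ea x.1 := fun _ => rfl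
  have hsub : (((prevRange dM p).addSubgroupOf (dM p).toAddMonoidHom.ker).map
      eker.toAddMonoidHom) =
      (prevRange dM' p).addSubgroupOf (dM' p).toAddMonoidHom.ker := by
    ext y
    rw [AddSubgroup.mem_map]
    constructor
    · rintro ⟨x, hx, rfl⟩
      rw [AddSubgroup.mem_addSubgroupOf] at hx ⊢
      rw [ekerval', eaval]
      exact (hrange _ _).mp hx
    · intro hy
      refine ⟨eker.symm y, ?_, eker.apply_symm_apply y⟩
      rw [AddSubgroup.mem_addSubgroupOf] at hy ⊢
      rw [hrange p]
      have hv : (e p) ((eker.symm y : (dM p).toAddMonoidHom.ker) : M p) = (y : M' p) := by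
        rw [← eaval, ← ekerval, eker.apply_symm_apply]
      rw [hv]
      exact hy
  exact ⟨QuotientAddGroup.congr _ _ eker hsub⟩

section abstract
variable {ι : Type} [DecidableEq ι]
  {N : ι → ℕ → Type} [∀ ω p, AddCommGroup (N ω p)] [∀ ω p, Module ℤ (N ω p)]

theorem Hgrp_dfinsupp (dN : ∀ ω, ∀ p : ℕ, N ω p →ₗ[ℤ] N ω (p+1)) (p : ℕ) :
    Nonempty (Hgrp (fun p : ℕ => (DFinsupp.mapRange.linearMap (fun ω => dN ω p) :
        (Π₀ ω, N ω p) →ₗ[ℤ] Π₀ ω, N ω (p+1))) p ≃+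
      DirectSum ι (fun ω => Hgrp (dN ω) p)) := by
  classical
  set D : ∀ p : ℕ, (Π₀ ω, N ω p) →ₗ[ℤ] (Π₀ ω, N ω (p+1)) :=
    fun p => DFinsupp.mapRange.linearMap (fun ω => dN ω p) with hD
  have Dapp : ∀ (q : ℕ) (x : Π₀ ω, N ω q) (ω : ι), D q x ω = dN ω q (x ω) := by
    intro q x ω; simp [hD]
  have hker : ∀ x : Π₀ ω, N ω p, x ∈ (D p).toAddMonoidHom.ker ↔
      ∀ ω, x ω ∈ (dN ω p).toAddMonoidHom.ker := by
    intro x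
    simp only [AddMonoidHom.mem_ker, LinearMap.toAddMonoidHom_coe, DFinsupp.ext_iff, Dapp]
    simp
  have hrange : ∀ y : Π₀ ω, N ω p, y ∈ prevRange D p ↔
      ∀ ω, y ω ∈ prevRange (dN ω) p := by
    intro y
    match p with
    | 0 =>
      show y ∈ (⊥ : AddSubgroup _) ↔ ∀ ω, y ω ∈ (⊥ : AddSubgroup _)
      simp [AddSubgroup.mem_bot, DFinsupp.ext_iff]
    | q + 1 =>
      show y ∈ AddMonoidHom.range (D q).toAddMonoidHom ↔
        ∀ ω, y ω ∈ AddMonoidHom.range (dN ω q).toAddMonoidHom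
      constructor
      · rintro ⟨a, rfl⟩ ω
        exact ⟨a ω, (Dapp q a ω).symm⟩
      · intro h
        refine ⟨DFinsupp.mk y.support (fun ω => Classical.choose (h ω.1)), ?_⟩
        ext ω
        rw [LinearMap.toAddMonoidHom_coe, Dapp]
        by_cases hω : ω ∈ y.support
        · rw [DFinsupp.mk_apply, dif_pos hω]
          exact Classical.choose_spec (h ω)
        · rw [DFinsupp.mk_apply, dif_neg hω, map_zero]
          exact (DFinsupp.notMem_support_iff.mp hω).symm
  -- the map ψ from the direct sum of kernels into the kernel of D p
  set ψ0 : (Π₀ ω, (dN ω p).toAddMonoidHom.ker) →+ (Π₀ ω, N ω p) :=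
    DFinsupp.mapRange.addMonoidHom (fun ω => ((dN ω p).toAddMonoidHom.ker.subtype)) with hψ0
  have ψ0app : ∀ z ω, ψ0 z ω = (z ω).1 := by intro z ω; simp [hψ0]
  have hψ0mem : ∀ z, ψ0 z ∈ (D p).toAddMonoidHom.ker := by
    intro z
    rw [hker]
    intro ω
    rw [ψ0app]
    exact (z ω).2
  set ψ : (Π₀ ω, (dN ω p).toAddMonoidHom.ker) →+ (D p).toAddMonoidHom.ker :=
    ψ0.codRestrict _ hψ0mem with hψ
  have ψapp : ∀ z ω, (ψ z).1 ω = (z ω).1 := by intro z ω; rw [hψ]; exact ψ0app z ω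
  have ψbij : Function.Bijective ψ := by
    constructor
    · intro a b hab
      ext ω
      have := congrArg (fun w => w.1 ω) hab
      simpa [ψapp] using this
    · rintro ⟨y, hy⟩
      refine ⟨DFinsupp.mk y.support (fun ω => ⟨y ω.1, (hker y).mp hy ω.1⟩), ?_⟩
      ext ω
      rw [ψapp]
      by_cases hω : ω ∈ y.support
      · rw [DFinsupp.mk_apply, dif_pos hω]
      · rw [DFinsupp.mk_apply, dif_neg hω]
        exact (DFinsupp.notMem_support_iff.mp hω).symm
  set E := AddEquiv.ofBijective ψ ψbij with hE
  have Esymmapp : ∀ (x : (D p).toAddMonoidHom.ker) (ω : ι), ((E.symm x) ω).1 = x.1 ω := by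
    intro x ω
    rw [← ψapp (E.symm x) ω]
    congr 1
    exact congrArg Subtype.val (E.apply_symm_apply x)
  set Q : (Π₀ ω, (dN ω p).toAddMonoidHom.ker) →+
      DirectSum ι (fun ω => Hgrp (dN ω) p) :=
    DFinsupp.mapRange.addMonoidHom (fun ω =>
      QuotientAddGroup.mk' ((prevRange (dN ω) p).addSubgroupOf (dN ω p).toAddMonoidHom.ker)) with hQ
  have Qapp : ∀ z ω, Q z ω = QuotientAddGroup.mk' _ (z ω) := by intro z ω; simp [hQ]; rfl
  set F : ((D p).toAddMonoidHom.ker) →+ DirectSum ι (fun ω => Hgrp (dN ω) p) :=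
    Q.comp E.symm.toAddMonoidHom with hF
  have hkerF : F.ker = (prevRange D p).addSubgroupOf (D p).toAddMonoidHom.ker := by
    ext x
    rw [AddMonoidHom.mem_ker, AddSubgroup.mem_addSubgroupOf, hrange]
    rw [hF, AddMonoidHom.comp_apply]
    rw [DFinsupp.ext_iff]
    apply forall_congr'
    intro ω
    rw [AddEquiv.coe_toAddMonoidHom, Qapp]
    rw [show (0 : DirectSum ι (fun ω => Hgrp (dN ω) p)) ω = 0 from rfl]
    rw [QuotientAddGroup.mk'_apply, QuotientAddGroup.eq_zero_iff,
      AddSubgroup.mem_addSubgroupOf, Esymmapp]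
  have hFsurj : Function.Surjective F := by
    intro y
    induction y using DirectSum.induction_on with
    | zero => exact ⟨0, map_zero F⟩
    | of ω q =>
      induction q using QuotientAddGroup.induction_on with
      | H k =>
        refine ⟨ψ (DFinsupp.single ω k), ?_⟩
        rw [hF, AddMonoidHom.comp_apply, AddEquiv.coe_toAddMonoidHom,
          show ψ (DFinsupp.single ω k) = E (DFinsupp.single ω k) from rfl,
          AddEquiv.symm_apply_apply]
        refine DFinsupp.ext fun ω' => ?_
        rw [Qapp]
        by_cases h : ω' = ω
        · subst h
          rw [DFinsupp.single_eq_same, DirectSum.of_eq_same, QuotientAddGroup.mk'_apply]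
        · rw [DFinsupp.single_eq_of_ne h]
          rw [show (DirectSum.of (fun ω => Hgrp (dN ω) p) ω (QuotientAddGroup.mk k)) ω'
            = 0 from DFinsupp.single_eq_of_ne h]
          simp
    | add a b ha hb =>
      obtain ⟨xa, hxa⟩ := ha
      obtain ⟨xb, hxb⟩ := hb
      exact ⟨xa + xb, by rw [map_add, hxa, hxb]⟩
  exact ⟨(QuotientAddGroup.quotientAddEquivOfEq hkerF.symm).trans
    (QuotientAddGroup.quotientKerEquivOfSurjective F hFsurj)⟩

end abstract


section concrete
variable {m : ℕ}

lemma sigmaCtB_ext {K : Finset (Finset (Fin m))} {p : ℕ} {ω ω' : Finset (Fin m)}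
    (h : ω = ω') {x : CtB K ω p} {y : CtB K ω' p} (hval : x.1 = y.1) :
    (⟨ω, x⟩ : Σ ω : Finset (Fin m), CtB K ω p) = ⟨ω', y⟩ := by
  subst h
  exact congrArg _ (Subtype.ext hval)

lemma dsingle_single_congr {K : Finset (Finset (Fin m))} {q : ℕ} {ω ω' σ σ' : Finset (Fin m)}
    (h : ω = ω') (hσ : σ = σ')
    {hx : (∃ s ∈ K, s ∩ ω = σ) ∧ σ.card = q} {hy : (∃ s ∈ K, s ∩ ω' = σ') ∧ σ'.card = q}
    (c c' : ℤ) (hc : c = c') :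
    (DFinsupp.single ω (Finsupp.single (⟨σ, hx⟩ : CtB K ω q) c) :
        Π₀ ω : Finset (Fin m), CtB K ω q →₀ ℤ) =
      DFinsupp.single ω' (Finsupp.single (⟨σ', hy⟩ : CtB K ω' q) c') := by
  subst h; subst hσ; subst hc; rfl

def splitEquiv (K : Finset (Finset (Fin m)))
    (hKdown : ∀ σ ∈ K, ∀ τ ⊆ σ, τ ∈ K) (p : ℕ) :
    TB K p ≃ Σ ω : Finset (Fin m), CtB K ω p where
  toFun b := ⟨b.1.1 ∪ b.1.2,
    ⟨b.1.1, ⟨b.1.1, b.2.1, Finset.inter_eq_left.mpr Finset.subset_union_left⟩, b.2.2.2⟩⟩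
  invFun x := ⟨(x.2.1, x.1 \ x.2.1), by
    refine ⟨?_, Finset.disjoint_sdiff, x.2.2.2⟩
    obtain ⟨⟨s, hs, hsx⟩, hc⟩ := x.2.2
    exact hKdown s hs _ (by rw [← hsx]; exact Finset.inter_subset_left)⟩
  left_inv b := Subtype.ext (Prod.ext rfl (Finset.union_sdiff_cancel_left b.2.2.1))
  right_inv x := by
    obtain ⟨ω, σ⟩ := x
    have hsub : σ.1 ⊆ ω := by
      obtain ⟨⟨s, hs, hsx⟩, -⟩ := σ.2
      rw [← hsx]; exact Finset.inter_subset_right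
    exact sigmaCtB_ext (Finset.union_sdiff_of_subset hsub) rfl

noncomputable def eqv (K : Finset (Finset (Fin m)))
    (hKdown : ∀ σ ∈ K, ∀ τ ⊆ σ, τ ∈ K) (p : ℕ) :
    (TB K p →₀ ℤ) ≃ₗ[ℤ] Π₀ ω : Finset (Fin m), (CtB K ω p →₀ ℤ) :=
  (Finsupp.domLCongr (splitEquiv K hKdown p)).trans (sigmaFinsuppLequivDFinsupp ℤ)

lemma eqv_single (K : Finset (Finset (Fin m)))
    (hKdown : ∀ σ ∈ K, ∀ τ ⊆ σ, τ ∈ K) (p : ℕ) (b : TB K p) (c : ℤ) :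
    eqv K hKdown p (Finsupp.single b c) =
      DFinsupp.single (splitEquiv K hKdown p b).1
        (Finsupp.single (splitEquiv K hKdown p b).2 c) := by
  rw [eqv]
  simp only [LinearEquiv.trans_apply, Finsupp.domLCongr_single]
  rw [show ((sigmaFinsuppLequivDFinsupp ℤ :
      ((Σ ω : Finset (Fin m), CtB K ω p) →₀ ℤ) ≃ₗ[ℤ] Π₀ ω : Finset (Fin m), CtB K ω p →₀ ℤ)
      (Finsupp.single (splitEquiv K hKdown p b) c)) =
    sigmaFinsuppEquivDFinsupp (Finsupp.single (splitEquiv K hKdown p b) c) from rfl]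
  rw [sigmaFinsuppEquivDFinsupp_single]

lemma key (K : Finset (Finset (Fin m)))
    (hKdown : ∀ σ ∈ K, ∀ τ ⊆ σ, τ ∈ K) (q : ℕ) (σ τ : Finset (Fin m))
    (hσK : σ ∈ K) (hdisj : Disjoint σ τ) (hcard : σ.card = q) :
    eqv K hKdown (q+1) (dTaux K q ⟨(σ, τ), hσK, hdisj, hcard⟩) =
      DFinsupp.single (σ ∪ τ)
        (dCtaux K (σ ∪ τ) q
          ⟨σ, ⟨σ, hσK, Finset.inter_eq_left.mpr Finset.subset_union_left⟩, hcard⟩) := by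
  classical
  unfold dTaux dCtaux
  rw [map_sum]
  have hsingle_sum : ∀ (s : Finset {x // x ∈ (σ ∪ τ) \ σ})
      (f : {x // x ∈ (σ ∪ τ) \ σ} → (CtB K (σ ∪ τ) (q+1) →₀ ℤ)),
      (DFinsupp.single (σ ∪ τ) (∑ i ∈ s, f i) :
        Π₀ ω : Finset (Fin m), CtB K ω (q+1) →₀ ℤ) =
        ∑ i ∈ s, DFinsupp.single (σ ∪ τ) (f i) := by
    intro s f
    have h := map_sum (DFinsupp.singleAddHom (fun ω => CtB K ω (q+1) →₀ ℤ) (σ ∪ τ)) f s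
    simpa only [DFinsupp.singleAddHom_apply] using h
  rw [hsingle_sum]
  refine Finset.sum_bij'
    (fun a _ => (⟨a.1, Finset.mem_sdiff.mpr ⟨Finset.mem_union_right _ a.2,
      Finset.disjoint_right.mp hdisj a.2⟩⟩ : {x // x ∈ (σ ∪ τ) \ σ}))
    (fun a _ => (⟨a.1, by
      rcases Finset.mem_sdiff.mp a.2 with ⟨h1, h2⟩
      rcases Finset.mem_union.mp h1 with h | h
      · exact absurd h h2
      · exact h⟩ : {x // x ∈ τ}))
    (fun a ha => Finset.mem_attach _ _) (fun a ha => Finset.mem_attach _ _)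
    (fun a ha => Subtype.ext rfl) (fun a ha => Subtype.ext rfl) ?_
  intro a ha
  have hins_sub : insert a.1 σ ⊆ σ ∪ τ := by
    intro x hx
    rcases Finset.mem_insert.mp hx with rfl | hx
    · exact Finset.mem_union_right _ a.2
    · exact Finset.mem_union_left _ hx
  have hiff : (insert a.1 σ ∈ K) ↔ (∃ s ∈ K, s ∩ (σ ∪ τ) = insert a.1 σ) := by
    constructor
    · intro h
      exact ⟨insert a.1 σ, h, Finset.inter_eq_left.mpr hins_sub⟩
    · rintro ⟨s, hs, hsx⟩
      exact hKdown s hs _ (by rw [← hsx]; exact Finset.inter_subset_left)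
  rw [apply_dite (eqv K hKdown (q+1)), map_zero]
  by_cases hK : insert a.1 σ ∈ K
  · rw [dif_pos hK, dif_pos (hiff.mp hK)]
    erw [eqv_single]
    refine dsingle_single_congr ?_ rfl _ _ ?_
    · show insert a.1 σ ∪ τ.erase a.1 = σ ∪ τ
      rw [Finset.insert_union, ← Finset.union_insert, Finset.insert_erase a.2]
    · congr 1
  · rw [dif_neg hK, dif_neg (fun h => hK (hiff.mpr h))]
    simp

end concrete

/-- Additive Hochster formula: `H^p(T(K)) ≅ ⊕_{ω ⊆ [m]} H̃^{p−1}(K_ω)` for all `p ≥ 0`. -/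
theorem additive_Hochster {m : ℕ} (K : Finset (Finset (Fin m)))
    (hKempty : (∅ : Finset (Fin m)) ∈ K)
    (hKdown : ∀ σ ∈ K, ∀ τ ⊆ σ, τ ∈ K) (p : ℕ) :
    Nonempty (Hgrp (dT K) p ≃+
      DirectSum (Finset (Fin m)) (fun ω => Hgrp (dCt K ω) p)) := by
  classical
  have hcomm : ∀ (q : ℕ) (x : TB K q →₀ ℤ),
      eqv K hKdown (q+1) (dT K q x) =
        (DFinsupp.mapRange.linearMap (fun ω => dCt K ω q) :
          (Π₀ ω : Finset (Fin m), CtB K ω q →₀ ℤ) →ₗ[ℤ]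
            Π₀ ω : Finset (Fin m), CtB K ω (q+1) →₀ ℤ) (eqv K hKdown q x) := by
    intro q x
    induction x using Finsupp.induction_linear with
    | zero => simp
    | add f g hf hg => simp [map_add, hf, hg]
    | single b c =>
      obtain ⟨⟨σ, τ⟩, hσK, hdisj, hcard⟩ := b
      have h1 : dT K q (Finsupp.single (⟨(σ, τ), hσK, hdisj, hcard⟩ : TB K q) c) =
          c • dTaux K q ⟨(σ, τ), hσK, hdisj, hcard⟩ := by
        rw [dT]
        rw [Finsupp.lift_apply]
        exact Finsupp.sum_single_index (by simp)
      rw [h1, map_smul, key K hKdown q σ τ hσK hdisj hcard]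
      erw [eqv_single]
      have h2 : ∀ (ω : Finset (Fin m)) (v : CtB K ω q →₀ ℤ),
          (DFinsupp.mapRange.linearMap (fun ω => dCt K ω q) :
            (Π₀ ω : Finset (Fin m), CtB K ω q →₀ ℤ) →ₗ[ℤ]
              Π₀ ω : Finset (Fin m), CtB K ω (q+1) →₀ ℤ) (DFinsupp.single ω v) =
          DFinsupp.single ω (dCt K ω q v) := by
        intro ω v
        exact DFinsupp.mapRange_single (hf := fun i => map_zero _)
      rw [h2]
      have h3 : ∀ (ω : Finset (Fin m)) (x : CtB K ω q),
          dCt K ω q (Finsupp.single x c) = c • dCtaux K ω q x := by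
        intro ω x
        rw [dCt, Finsupp.lift_apply, Finsupp.sum_single_index (by simp)]
      rw [h3]
      rw [show (DFinsupp.single ((splitEquiv K hKdown q ⟨(σ, τ), hσK, hdisj, hcard⟩).1)
          (c • dCtaux K _ q (splitEquiv K hKdown q ⟨(σ, τ), hσK, hdisj, hcard⟩).2) :
          Π₀ ω : Finset (Fin m), CtB K ω (q+1) →₀ ℤ) =
        c • DFinsupp.single ((splitEquiv K hKdown q ⟨(σ, τ), hσK, hdisj, hcard⟩).1)
          (dCtaux K _ q (splitEquiv K hKdown q ⟨(σ, τ), hσK, hdisj, hcard⟩).2) from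
        DFinsupp.single_smul (β := fun ω : Finset (Fin m) => CtB K ω (q+1) →₀ ℤ) c _]
      rfl
  obtain ⟨E1⟩ := Hgrp_congr (dT K)
    (fun q => (DFinsupp.mapRange.linearMap (fun ω => dCt K ω q) :
      (Π₀ ω : Finset (Fin m), CtB K ω q →₀ ℤ) →ₗ[ℤ]
        Π₀ ω : Finset (Fin m), CtB K ω (q+1) →₀ ℤ))
    (eqv K hKdown) hcomm p
  obtain ⟨E2⟩ := Hgrp_dfinsupp (fun ω q => dCt K ω q) p
  exact ⟨E1.trans E2⟩
end

section
/- (Multiplicative Hochster formula, cochain level) Let ω₁, ω₂ ⊆ [m] be disjoint. Then the ℤ-bilinear map C̃^{p−1}(K_{ω₁}) × C̃^{q−1}(K_{ω₂}) → C̃^{p+q−1}(K_{ω₁∪ω₂}) defined on basis elements by σ* · σ'* = (−1)^{ε(σ,σ')} (σ∪σ')* if σ ∪ σ' ∈ K, and σ* · σ'* = 0 if σ ∪ σ' ∉ K, where ε(σ,σ') = #{(j,i) ∈ σ × σ' : i < j}, satisfies the Leibniz rule δ(x·y) = δ(x)·y + (−1)^{deg x} x·δ(y); in particular it induces a well-defined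 product H̃^{p−1}(K_{ω₁}) ⊗ H̃^{q−1}(K_{ω₂}) → H̃^{p+q−1}(K_{ω₁∪ω₂}) on reduced simplicial cohomology. -/
/-- `ε(σ,σ') = #{(j,i) ∈ σ × σ' : i < j}`. -/
def epsSign {m : ℕ} (σ σ' : Finset (Fin m)) : ℕ :=
  ((σ ×ˢ σ').filter (fun ji => ji.2 < ji.1)).card

open Classical in
/-- The product on basis elements: `σ* · σ'* = (−1)^{ε(σ,σ')}(σ∪σ')*` if `σ∪σ' ∈ K`,
else `0`. -/
noncomputable def ctMulAux {m : ℕ} (K : Finset (Finset (Fin m))) (ω₁ ω₂ : Finset (Fin m))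
    (hd : Disjoint ω₁ ω₂) {p q : ℕ} (b : CtB K ω₁ p) (b' : CtB K ω₂ q) :
    (CtB K (ω₁ ∪ ω₂) (p + q) →₀ ℤ) :=
  if h : b.1 ∪ b'.1 ∈ K then
    Finsupp.single
      ⟨b.1 ∪ b'.1,
        ⟨b.1 ∪ b'.1, h, by
          have hb : b.1 ⊆ ω₁ := by
            obtain ⟨s, _, hs⟩ := b.2.1
            rw [← hs]; exact Finset.inter_subset_right
          have hb' : b'.1 ⊆ ω₂ := by
            obtain ⟨s, _, hs⟩ := b'.2.1
            rw [← hs]; exact Finset.inter_subset_right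
          exact Finset.inter_eq_left.mpr (Finset.union_subset_union hb hb')⟩,
        by
          have hb : b.1 ⊆ ω₁ := by
            obtain ⟨s, _, hs⟩ := b.2.1
            rw [← hs]; exact Finset.inter_subset_right
          have hb' : b'.1 ⊆ ω₂ := by
            obtain ⟨s, _, hs⟩ := b'.2.1
            rw [← hs]; exact Finset.inter_subset_right
          rw [Finset.card_union_of_disjoint (hd.mono hb hb'), b.2.2, b'.2.2]⟩
      ((-1 : ℤ) ^ epsSign b.1 b'.1)
  else 0

/-- The `ℤ`-bilinear product `C̃^{p−1}(K_{ω₁}) × C̃^{q−1}(K_{ω₂}) → C̃^{p+q−1}(K_{ω₁∪ω₂})`. -/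
noncomputable def ctMul {m : ℕ} (K : Finset (Finset (Fin m))) (ω₁ ω₂ : Finset (Fin m))
    (hd : Disjoint ω₁ ω₂) (p q : ℕ) :
    (CtB K ω₁ p →₀ ℤ) →ₗ[ℤ] (CtB K ω₂ q →₀ ℤ) →ₗ[ℤ] (CtB K (ω₁ ∪ ω₂) (p + q) →₀ ℤ) :=
  Finsupp.lift _ ℤ _ (fun b => Finsupp.lift _ ℤ _ (fun b' => ctMulAux K ω₁ ω₂ hd b b'))

/-- Transport along an equality of indices. -/
noncomputable def ctCast {m : ℕ} (K : Finset (Finset (Fin m))) (ω : Finset (Fin m))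
    {p q : ℕ} (h : p = q) : (CtB K ω p →₀ ℤ) →ₗ[ℤ] (CtB K ω q →₀ ℤ) :=
  Finsupp.lmapDomain ℤ ℤ (fun b => ⟨b.1, b.2.1, h ▸ b.2.2⟩)

section HochsterAux

variable {m : ℕ}

theorem real_iff (K : Finset (Finset (Fin m)))
    (hKdown : ∀ σ ∈ K, ∀ τ ⊆ σ, τ ∈ K) (ω σ : Finset (Fin m)) :
    (∃ s ∈ K, s ∩ ω = σ) ↔ σ ∈ K ∧ σ ⊆ ω := by
  constructor
  · rintro ⟨s, hs, rfl⟩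
    exact ⟨hKdown s hs _ Finset.inter_subset_left, Finset.inter_subset_right⟩
  · rintro ⟨h1, h2⟩
    exact ⟨σ, h1, Finset.inter_eq_left.mpr h2⟩

theorem negpow_congr (a b : ℕ) (h : a % 2 = b % 2) : ((-1 : ℤ)) ^ a = (-1) ^ b := by
  conv_lhs => rw [← Nat.div_add_mod a 2]
  conv_rhs => rw [← Nat.div_add_mod b 2]
  rw [h, pow_add, pow_add, pow_mul, pow_mul, neg_one_sq, one_pow, one_pow]

theorem cnt_union {σ σ' : Finset (Fin m)} (h : Disjoint σ σ') (i : Fin m) :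
    ((σ ∪ σ').filter (fun j => j < i)).card =
      (σ.filter (fun j => j < i)).card + (σ'.filter (fun j => j < i)).card := by
  rw [Finset.filter_union, Finset.card_union_of_disjoint (Finset.disjoint_filter_filter h)]

theorem cnt_add_rev {σ : Finset (Fin m)} {i : Fin m} (hi : i ∉ σ) :
    (σ.filter (fun j => j < i)).card + (σ.filter (fun j => i < j)).card = σ.card := by
  have : σ.filter (fun j => i < j) = σ.filter (fun j => ¬ j < i) := by
    ext j
    simp only [Finset.mem_filter, and_congr_right_iff]
    intro hj
    constructor
    · intro h; exact not_lt_of_gt h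
    · intro h
      rcases lt_or_gt_of_ne (fun e : j = i => hi (e ▸ hj)) with h' | h'
      · exact absurd h' h
      · exact h'
  rw [this, Finset.card_filter_add_card_filter_not]

theorem eps_insert_left {σ σ' : Finset (Fin m)} {i : Fin m} (h : i ∉ σ) :
    epsSign (insert i σ) σ' = (σ'.filter (fun j => j < i)).card + epsSign σ σ' := by
  have hset : (({i} ×ˢ σ').filter (fun ji : Fin m × Fin m => ji.2 < ji.1))
      = {i} ×ˢ (σ'.filter (fun j => j < i)) := by
    ext ⟨a, b⟩
    simp only [Finset.mem_filter, Finset.mem_product, Finset.mem_singleton]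
    constructor
    · rintro ⟨⟨rfl, hb⟩, hlt⟩; exact ⟨rfl, hb, hlt⟩
    · rintro ⟨rfl, hb, hlt⟩; exact ⟨⟨rfl, hb⟩, hlt⟩
  have hdisj : Disjoint (({i} ×ˢ σ').filter (fun ji : Fin m × Fin m => ji.2 < ji.1))
      ((σ ×ˢ σ').filter (fun ji : Fin m × Fin m => ji.2 < ji.1)) := by
    rw [Finset.disjoint_left]
    rintro ⟨a, b⟩ h1 h2
    simp only [Finset.mem_filter, Finset.mem_product, Finset.mem_singleton] at h1 h2
    exact h (h1.1.1 ▸ h2.1.1)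
  rw [epsSign, Finset.insert_eq, Finset.union_product, Finset.filter_union,
    Finset.card_union_of_disjoint hdisj, hset, Finset.singleton_product, Finset.card_map,
    epsSign]

theorem eps_insert_right {σ σ' : Finset (Fin m)} {i : Fin m} (h : i ∉ σ') :
    epsSign σ (insert i σ') = (σ.filter (fun j => i < j)).card + epsSign σ σ' := by
  have hset : ((σ ×ˢ {i}).filter (fun ji : Fin m × Fin m => ji.2 < ji.1))
      = (σ.filter (fun j => i < j)) ×ˢ {i} := by
    ext ⟨a, b⟩
    simp only [Finset.mem_filter, Finset.mem_product, Finset.mem_singleton]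
    constructor
    · rintro ⟨⟨ha, rfl⟩, hlt⟩; exact ⟨⟨ha, hlt⟩, rfl⟩
    · rintro ⟨⟨ha, hlt⟩, rfl⟩; exact ⟨⟨ha, rfl⟩, hlt⟩
  have hdisj : Disjoint ((σ ×ˢ {i}).filter (fun ji : Fin m × Fin m => ji.2 < ji.1))
      ((σ ×ˢ σ').filter (fun ji : Fin m × Fin m => ji.2 < ji.1)) := by
    rw [Finset.disjoint_left]
    rintro ⟨a, b⟩ h1 h2
    simp only [Finset.mem_filter, Finset.mem_product, Finset.mem_singleton] at h1 h2
    exact h (h1.1.2 ▸ h2.1.2)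
  rw [epsSign, Finset.insert_eq, Finset.product_union, Finset.filter_union,
    Finset.card_union_of_disjoint hdisj, hset, Finset.product_singleton, Finset.card_map,
    epsSign]

theorem sdiff_union_eq {σ σ' ω₁ ω₂ : Finset (Fin m)} (hσ : σ ⊆ ω₁) (hσ' : σ' ⊆ ω₂)
    (hd : Disjoint ω₁ ω₂) :
    (ω₁ ∪ ω₂) \ (σ ∪ σ') = (ω₁ \ σ) ∪ (ω₂ \ σ') := by
  ext x
  simp only [Finset.mem_sdiff, Finset.mem_union, not_or]
  constructor
  · rintro ⟨h1 | h1, h2, h3⟩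
    · exact Or.inl ⟨h1, h2⟩
    · exact Or.inr ⟨h1, h3⟩
  · rintro (⟨h1, h2⟩ | ⟨h1, h2⟩)
    · exact ⟨Or.inl h1, h2, fun hx => Finset.disjoint_left.mp hd h1 (hσ' hx)⟩
    · exact ⟨Or.inr h1, fun hx => Finset.disjoint_right.mp hd h1 (hσ hx), h2⟩

open Classical in
noncomputable def dterm (K : Finset (Finset (Fin m))) (ω : Finset (Fin m)) (p : ℕ)
    (σ : Finset (Fin m)) (i : Fin m) : CtB K ω (p + 1) →₀ ℤ :=
  if h : (∃ s ∈ K, s ∩ ω = insert i σ) ∧ σ.card = p ∧ i ∉ σ then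
    Finsupp.single ⟨insert i σ, h.1, by rw [Finset.card_insert_of_notMem h.2.2, h.2.1]⟩
      ((-1 : ℤ) ^ (σ.filter (fun j => j < i)).card)
  else 0

theorem dCtaux_eq (K : Finset (Finset (Fin m))) (ω : Finset (Fin m)) (p : ℕ) (b : CtB K ω p) :
    dCtaux K ω p b = ∑ i ∈ ω \ b.1, dterm K ω p b.1 i := by
  rw [dCtaux]
  refine Eq.trans (Finset.sum_congr rfl ?_) (Finset.sum_attach _ (fun i => dterm K ω p b.1 i))
  rintro ⟨i, hi⟩ -
  have hi' : i ∉ b.1 := (Finset.mem_sdiff.mp hi).2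
  by_cases h : ∃ s ∈ K, s ∩ ω = insert i b.1
  · rw [dif_pos h, dterm, dif_pos ⟨h, b.2.2, hi'⟩]
  · rw [dif_neg h, dterm, dif_neg (fun hc => h hc.1)]

theorem dCt_single (K : Finset (Finset (Fin m))) (ω : Finset (Fin m)) (p : ℕ)
    (b : CtB K ω p) (c : ℤ) :
    dCt K ω p (Finsupp.single b c) = c • dCtaux K ω p b := by
  rw [dCt, Finsupp.lift_apply]
  rw [Finsupp.sum_single_index]
  exact zero_smul ℤ _

theorem ctMul_single_single {K : Finset (Finset (Fin m))} {ω₁ ω₂ : Finset (Fin m)}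
    (hd : Disjoint ω₁ ω₂) (p q : ℕ) (b : CtB K ω₁ p) (b' : CtB K ω₂ q) (c c' : ℤ) :
    ctMul K ω₁ ω₂ hd p q (Finsupp.single b c) (Finsupp.single b' c') =
      (c * c') • ctMulAux K ω₁ ω₂ hd b b' := by
  rw [ctMul, Finsupp.lift_apply]
  rw [Finsupp.sum_single_index]
  · rw [LinearMap.smul_apply, Finsupp.lift_apply]
    rw [Finsupp.sum_single_index]
    · rw [smul_smul]
    · exact zero_smul ℤ _
  · exact zero_smul ℤ _

theorem ctCast_single (K : Finset (Finset (Fin m))) (ω : Finset (Fin m)) {p q : ℕ}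
    (h : p = q) (b : CtB K ω p) (c : ℤ) :
    ctCast K ω h (Finsupp.single b c) = Finsupp.single ⟨b.1, b.2.1, b.2.2.trans h⟩ c := by
  rw [ctCast]; exact Finsupp.mapDomain_single

theorem ctCast_id (K : Finset (Finset (Fin m))) (ω : Finset (Fin m)) {p : ℕ}
    (h : p = p) (x : CtB K ω p →₀ ℤ) : ctCast K ω h x = x := by
  induction x using Finsupp.induction_linear with
  | zero => exact map_zero _
  | add f g hf hg => rw [map_add, hf, hg]
  | single a c =>
    rw [ctCast_single]
    exact congrArg (fun t => Finsupp.single t c) (Subtype.ext rfl)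

theorem mem_prevRange_iff (K : Finset (Finset (Fin m))) (ω : Finset (Fin m)) {a b : ℕ}
    (h : a = b) (z : CtB K ω a →₀ ℤ) :
    z ∈ prevRange (dCt K ω) a ↔ ctCast K ω h z ∈ prevRange (dCt K ω) b := by
  subst h; rw [ctCast_id]

theorem prevRange_succ {M : ℕ → Type} [∀ p, AddCommGroup (M p)] [∀ p, Module ℤ (M p)]
    (d : ∀ p, M p →ₗ[ℤ] M (p + 1)) (k : ℕ) :
    prevRange d (k + 1) = AddMonoidHom.range (d k).toAddMonoidHom := rfl

end HochsterAux

section Hochster2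

variable {m : ℕ}

theorem dterm_eq_single {K : Finset (Finset (Fin m))} {ω : Finset (Fin m)} {p : ℕ}
    {σ : Finset (Fin m)} {i : Fin m}
    (h : (∃ s ∈ K, s ∩ ω = insert i σ) ∧ σ.card = p ∧ i ∉ σ)
    (key : CtB K ω (p + 1)) (hkey : key.1 = insert i σ) :
    dterm K ω p σ i = Finsupp.single key ((-1 : ℤ) ^ (σ.filter (fun j => j < i)).card) := by
  unfold dterm
  rw [dif_pos h]
  exact congrArg (fun t => Finsupp.single t _) (Subtype.ext hkey.symm)

theorem dterm_neg {K : Finset (Finset (Fin m))} {ω : Finset (Fin m)} {p : ℕ}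
    {σ : Finset (Fin m)} {i : Fin m}
    (h : ¬ ((∃ s ∈ K, s ∩ ω = insert i σ) ∧ σ.card = p ∧ i ∉ σ)) :
    dterm K ω p σ i = 0 := by
  unfold dterm
  rw [dif_neg h]

theorem ctMulAux_eq_single {K : Finset (Finset (Fin m))} {ω₁ ω₂ : Finset (Fin m)}
    {hd : Disjoint ω₁ ω₂} {p q : ℕ} {b : CtB K ω₁ p} {b' : CtB K ω₂ q}
    (h : b.1 ∪ b'.1 ∈ K) (key : CtB K (ω₁ ∪ ω₂) (p + q)) (hkey : key.1 = b.1 ∪ b'.1) :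
    ctMulAux K ω₁ ω₂ hd b b' = Finsupp.single key ((-1 : ℤ) ^ epsSign b.1 b'.1) := by
  unfold ctMulAux
  rw [dif_pos h]
  exact congrArg (fun t => Finsupp.single t _) (Subtype.ext hkey.symm)

theorem ctMulAux_neg {K : Finset (Finset (Fin m))} {ω₁ ω₂ : Finset (Fin m)}
    {hd : Disjoint ω₁ ω₂} {p q : ℕ} {b : CtB K ω₁ p} {b' : CtB K ω₂ q}
    (h : b.1 ∪ b'.1 ∉ K) : ctMulAux K ω₁ ω₂ hd b b' = 0 := by
  unfold ctMulAux
  rw [dif_neg h]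

theorem dCt_ctMulAux (K : Finset (Finset (Fin m)))
    (hKdown : ∀ σ ∈ K, ∀ τ ⊆ σ, τ ∈ K)
    (ω₁ ω₂ : Finset (Fin m)) (hd : Disjoint ω₁ ω₂) {p q : ℕ}
    (b : CtB K ω₁ p) (b' : CtB K ω₂ q) :
    dCt K (ω₁ ∪ ω₂) (p + q) (ctMulAux K ω₁ ω₂ hd b b') =
      ((-1 : ℤ) ^ epsSign b.1 b'.1) •
        ∑ i ∈ (ω₁ ∪ ω₂) \ (b.1 ∪ b'.1), dterm K (ω₁ ∪ ω₂) (p + q) (b.1 ∪ b'.1) i := by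
  have hb : b.1 ⊆ ω₁ := ((real_iff K hKdown ω₁ b.1).mp b.2.1).2
  have hb' : b'.1 ⊆ ω₂ := ((real_iff K hKdown ω₂ b'.1).mp b'.2.1).2
  have hdss : Disjoint b.1 b'.1 := hd.mono hb hb'
  by_cases hK : b.1 ∪ b'.1 ∈ K
  · have hcard : (b.1 ∪ b'.1).card = p + q := by
      rw [Finset.card_union_of_disjoint hdss, b.2.2, b'.2.2]
    have hre : ∃ s ∈ K, s ∩ (ω₁ ∪ ω₂) = b.1 ∪ b'.1 :=
      (real_iff K hKdown _ _).mpr ⟨hK, Finset.union_subset_union hb hb'⟩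
    erw [ctMulAux_eq_single hK ⟨b.1 ∪ b'.1, hre, hcard⟩ rfl, dCt_single, dCtaux_eq]
  · have hz : ∑ i ∈ (ω₁ ∪ ω₂) \ (b.1 ∪ b'.1), dterm K (ω₁ ∪ ω₂) (p + q) (b.1 ∪ b'.1) i = 0 := by
      refine Finset.sum_eq_zero fun i hi => dterm_neg ?_
      rintro ⟨hre2, -, -⟩
      exact hK (hKdown _ ((real_iff K hKdown _ _).mp hre2).1 _ (Finset.subset_insert i _))
    rw [ctMulAux_neg hK, map_zero, hz, smul_zero]

theorem term1_eq (K : Finset (Finset (Fin m)))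
    (hKdown : ∀ σ ∈ K, ∀ τ ⊆ σ, τ ∈ K)
    (ω₁ ω₂ : Finset (Fin m)) (hd : Disjoint ω₁ ω₂) (p q : ℕ)
    (b : CtB K ω₁ p) (b' : CtB K ω₂ q) (i : Fin m) (hi : i ∈ ω₁ \ b.1) :
    ctCast K (ω₁ ∪ ω₂) (Nat.succ_add p q)
        (ctMul K ω₁ ω₂ hd (p + 1) q (dterm K ω₁ p b.1 i) (Finsupp.single b' 1)) =
      ((-1 : ℤ) ^ epsSign b.1 b'.1) • dterm K (ω₁ ∪ ω₂) (p + q) (b.1 ∪ b'.1) i := by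
  have hb : b.1 ⊆ ω₁ := ((real_iff K hKdown ω₁ b.1).mp b.2.1).2
  have hb' : b'.1 ⊆ ω₂ := ((real_iff K hKdown ω₂ b'.1).mp b'.2.1).2
  have hdss : Disjoint b.1 b'.1 := hd.mono hb hb'
  have hiω : i ∈ ω₁ := (Finset.mem_sdiff.mp hi).1
  have hiσ : i ∉ b.1 := (Finset.mem_sdiff.mp hi).2
  have hiσ' : i ∉ b'.1 := fun hc => Finset.disjoint_left.mp hd hiω (hb' hc)
  have hiτ : i ∉ b.1 ∪ b'.1 := fun hc => (Finset.mem_union.mp hc).elim hiσ hiσ'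
  by_cases hiK : insert i (b.1 ∪ b'.1) ∈ K
  · have h1 : insert i b.1 ∈ K := by
      refine hKdown _ hiK _ ?_
      intro x hx
      rcases Finset.mem_insert.mp hx with rfl | hx'
      · exact Finset.mem_insert_self _ _
      · exact Finset.mem_insert_of_mem (Finset.mem_union_left _ hx')
    have hre1 : ∃ s ∈ K, s ∩ ω₁ = insert i b.1 :=
      (real_iff K hKdown ω₁ _).mpr ⟨h1, Finset.insert_subset hiω hb⟩
    have hreτ : ∃ s ∈ K, s ∩ (ω₁ ∪ ω₂) = insert i (b.1 ∪ b'.1) :=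
      (real_iff K hKdown _ _).mpr ⟨hiK, Finset.insert_subset (Finset.mem_union_left _ hiω)
        (Finset.union_subset_union hb hb')⟩
    have hc1 : (insert i b.1).card = p + 1 := by
      rw [Finset.card_insert_of_notMem hiσ, b.2.2]
    have hcτ : (insert i (b.1 ∪ b'.1)).card = (p + q) + 1 := by
      rw [Finset.card_insert_of_notMem hiτ, Finset.card_union_of_disjoint hdss, b.2.2, b'.2.2]
    have hcμ : (insert i (b.1 ∪ b'.1)).card = (p + 1) + q := by
      rw [hcτ]; omega
    have hττ : (b.1 ∪ b'.1).card = p + q := by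
      rw [Finset.card_union_of_disjoint hdss, b.2.2, b'.2.2]
    erw [dterm_eq_single ⟨hre1, b.2.2, hiσ⟩ ⟨insert i b.1, hre1, hc1⟩ rfl,
      ctMul_single_single,
      ctMulAux_eq_single (b := ⟨insert i b.1, hre1, hc1⟩)
        (show insert i b.1 ∪ b'.1 ∈ K by rw [Finset.insert_union]; exact hiK)
        ⟨insert i (b.1 ∪ b'.1), hreτ, hcμ⟩ (Finset.insert_union i b.1 b'.1).symm,
      dterm_eq_single ⟨hreτ, hττ, hiτ⟩ ⟨insert i (b.1 ∪ b'.1), hreτ, hcτ⟩ rfl,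
      map_smul, ctCast_single, Finsupp.smul_single, Finsupp.smul_single]
    refine (Finsupp.single_eq_single_iff _ _ _ _).mpr (Or.inl ⟨Subtype.ext rfl, ?_⟩)
    show ((-1 : ℤ) ^ (Finset.filter (fun j => j < i) b.1).card * 1) •
        ((-1 : ℤ) ^ epsSign (insert i b.1) b'.1) =
      ((-1 : ℤ) ^ epsSign b.1 b'.1) •
        ((-1 : ℤ) ^ (Finset.filter (fun j => j < i) (b.1 ∪ b'.1)).card)
    rw [eps_insert_left hiσ, cnt_union hdss]
    simp only [smul_eq_mul, mul_one, ← pow_add]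
    exact negpow_congr _ _ (by omega)
  · have hz : dterm K (ω₁ ∪ ω₂) (p + q) (b.1 ∪ b'.1) i = 0 :=
      dterm_neg (fun hc => hiK ((real_iff K hKdown _ _).mp hc.1).1)
    rw [hz, smul_zero]
    by_cases h1 : (∃ s ∈ K, s ∩ ω₁ = insert i b.1) ∧ b.1.card = p ∧ i ∉ b.1
    · have hc1 : (insert i b.1).card = p + 1 := by
        rw [Finset.card_insert_of_notMem hiσ, b.2.2]
      erw [dterm_eq_single h1 ⟨insert i b.1, h1.1, hc1⟩ rfl, ctMul_single_single,
        ctMulAux_neg (b := ⟨insert i b.1, h1.1, hc1⟩)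
          (fun hc => hiK (Finset.insert_union i b.1 b'.1 ▸ hc)),
        smul_zero, map_zero]
    · rw [dterm_neg h1, map_zero, LinearMap.zero_apply, map_zero]

theorem term2_eq (K : Finset (Finset (Fin m)))
    (hKdown : ∀ σ ∈ K, ∀ τ ⊆ σ, τ ∈ K)
    (ω₁ ω₂ : Finset (Fin m)) (hd : Disjoint ω₁ ω₂) (p q : ℕ)
    (b : CtB K ω₁ p) (b' : CtB K ω₂ q) (i : Fin m) (hi : i ∈ ω₂ \ b'.1) :
    ((-1 : ℤ) ^ p) • ctCast K (ω₁ ∪ ω₂) (Nat.add_succ p q)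
        (ctMul K ω₁ ω₂ hd p (q + 1) (Finsupp.single b 1) (dterm K ω₂ q b'.1 i)) =
      ((-1 : ℤ) ^ epsSign b.1 b'.1) • dterm K (ω₁ ∪ ω₂) (p + q) (b.1 ∪ b'.1) i := by
  have hb : b.1 ⊆ ω₁ := ((real_iff K hKdown ω₁ b.1).mp b.2.1).2
  have hb' : b'.1 ⊆ ω₂ := ((real_iff K hKdown ω₂ b'.1).mp b'.2.1).2
  have hdss : Disjoint b.1 b'.1 := hd.mono hb hb'
  have hiω : i ∈ ω₂ := (Finset.mem_sdiff.mp hi).1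
  have hiσ' : i ∉ b'.1 := (Finset.mem_sdiff.mp hi).2
  have hiσ : i ∉ b.1 := fun hc => Finset.disjoint_right.mp hd hiω (hb hc)
  have hiτ : i ∉ b.1 ∪ b'.1 := fun hc => (Finset.mem_union.mp hc).elim hiσ hiσ'
  by_cases hiK : insert i (b.1 ∪ b'.1) ∈ K
  · have h2 : insert i b'.1 ∈ K := by
      refine hKdown _ hiK _ ?_
      intro x hx
      rcases Finset.mem_insert.mp hx with rfl | hx'
      · exact Finset.mem_insert_self _ _
      · exact Finset.mem_insert_of_mem (Finset.mem_union_right _ hx')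
    have hre2 : ∃ s ∈ K, s ∩ ω₂ = insert i b'.1 :=
      (real_iff K hKdown ω₂ _).mpr ⟨h2, Finset.insert_subset hiω hb'⟩
    have hreτ : ∃ s ∈ K, s ∩ (ω₁ ∪ ω₂) = insert i (b.1 ∪ b'.1) :=
      (real_iff K hKdown _ _).mpr ⟨hiK, Finset.insert_subset (Finset.mem_union_right _ hiω)
        (Finset.union_subset_union hb hb')⟩
    have hc2 : (insert i b'.1).card = q + 1 := by
      rw [Finset.card_insert_of_notMem hiσ', b'.2.2]
    have hcτ : (insert i (b.1 ∪ b'.1)).card = (p + q) + 1 := by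
      rw [Finset.card_insert_of_notMem hiτ, Finset.card_union_of_disjoint hdss, b.2.2, b'.2.2]
    have hcμ : (insert i (b.1 ∪ b'.1)).card = p + (q + 1) := by
      rw [hcτ]; omega
    have hττ : (b.1 ∪ b'.1).card = p + q := by
      rw [Finset.card_union_of_disjoint hdss, b.2.2, b'.2.2]
    have hpr : (b.1.filter (fun j => j < i)).card + (b.1.filter (fun j => i < j)).card = p :=
      (cnt_add_rev hiσ).trans b.2.2
    erw [dterm_eq_single ⟨hre2, b'.2.2, hiσ'⟩ ⟨insert i b'.1, hre2, hc2⟩ rfl,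
      ctMul_single_single,
      ctMulAux_eq_single (b' := ⟨insert i b'.1, hre2, hc2⟩)
        (show b.1 ∪ insert i b'.1 ∈ K by rw [Finset.union_insert]; exact hiK)
        ⟨insert i (b.1 ∪ b'.1), hreτ, hcμ⟩ (Finset.union_insert i b.1 b'.1).symm,
      dterm_eq_single ⟨hreτ, hττ, hiτ⟩ ⟨insert i (b.1 ∪ b'.1), hreτ, hcτ⟩ rfl,
      map_smul, ctCast_single, Finsupp.smul_single, Finsupp.smul_single, Finsupp.smul_single]
    refine (Finsupp.single_eq_single_iff _ _ _ _).mpr (Or.inl ⟨Subtype.ext rfl, ?_⟩)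
    show ((-1 : ℤ) ^ p) • ((1 * (-1 : ℤ) ^ (Finset.filter (fun j => j < i) b'.1).card) •
        ((-1 : ℤ) ^ epsSign b.1 (insert i b'.1))) =
      ((-1 : ℤ) ^ epsSign b.1 b'.1) •
        ((-1 : ℤ) ^ (Finset.filter (fun j => j < i) (b.1 ∪ b'.1)).card)
    rw [eps_insert_right hiσ', cnt_union hdss]
    simp only [smul_eq_mul, one_mul, ← pow_add]
    exact negpow_congr _ _ (by omega)
  · have hz : dterm K (ω₁ ∪ ω₂) (p + q) (b.1 ∪ b'.1) i = 0 :=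
      dterm_neg (fun hc => hiK ((real_iff K hKdown _ _).mp hc.1).1)
    rw [hz, smul_zero]
    by_cases h2 : (∃ s ∈ K, s ∩ ω₂ = insert i b'.1) ∧ b'.1.card = q ∧ i ∉ b'.1
    · have hc2 : (insert i b'.1).card = q + 1 := by
        rw [Finset.card_insert_of_notMem hiσ', b'.2.2]
      erw [dterm_eq_single h2 ⟨insert i b'.1, h2.1, hc2⟩ rfl, ctMul_single_single,
        ctMulAux_neg (b' := ⟨insert i b'.1, h2.1, hc2⟩)
          (fun hc => hiK (Finset.union_insert i b.1 b'.1 ▸ hc)),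
        smul_zero]
    · rw [dterm_neg h2, map_zero, map_zero, smul_zero]

theorem leibniz_single (K : Finset (Finset (Fin m)))
    (hKdown : ∀ σ ∈ K, ∀ τ ⊆ σ, τ ∈ K)
    (ω₁ ω₂ : Finset (Fin m)) (hd : Disjoint ω₁ ω₂) (p q : ℕ)
    (b : CtB K ω₁ p) (b' : CtB K ω₂ q) :
    dCt K (ω₁ ∪ ω₂) (p + q) (ctMulAux K ω₁ ω₂ hd b b') =
      ctCast K (ω₁ ∪ ω₂) (Nat.succ_add p q)
        (ctMul K ω₁ ω₂ hd (p + 1) q (dCtaux K ω₁ p b) (Finsupp.single b' 1)) +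
      ((-1 : ℤ) ^ p) • ctCast K (ω₁ ∪ ω₂) (Nat.add_succ p q)
        (ctMul K ω₁ ω₂ hd p (q + 1) (Finsupp.single b 1) (dCtaux K ω₂ q b')) := by
  have hb : b.1 ⊆ ω₁ := ((real_iff K hKdown ω₁ b.1).mp b.2.1).2
  have hb' : b'.1 ⊆ ω₂ := ((real_iff K hKdown ω₂ b'.1).mp b'.2.1).2
  have hdisj2 : Disjoint (ω₁ \ b.1) (ω₂ \ b'.1) :=
    hd.mono Finset.sdiff_subset Finset.sdiff_subset
  rw [dCt_ctMulAux K hKdown ω₁ ω₂ hd b b', sdiff_union_eq hb hb' hd,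
    Finset.sum_union hdisj2, smul_add]
  congr 1
  · rw [dCtaux_eq]
    simp only [map_sum, LinearMap.sum_apply]
    rw [Finset.smul_sum]
    exact Finset.sum_congr rfl fun i hi => (term1_eq K hKdown ω₁ ω₂ hd p q b b' i hi).symm
  · rw [dCtaux_eq]
    simp only [map_sum]
    rw [Finset.smul_sum, Finset.smul_sum]
    exact Finset.sum_congr rfl fun i hi => (term2_eq K hKdown ω₁ ω₂ hd p q b b' i hi).symm

end Hochster2

section Hochster3

variable {m : ℕ}

theorem leibniz_all (K : Finset (Finset (Fin m)))
    (hKdown : ∀ σ ∈ K, ∀ τ ⊆ σ, τ ∈ K)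
    (ω₁ ω₂ : Finset (Fin m)) (hd : Disjoint ω₁ ω₂) (p q : ℕ)
    (x : CtB K ω₁ p →₀ ℤ) (y : CtB K ω₂ q →₀ ℤ) :
    dCt K (ω₁ ∪ ω₂) (p + q) (ctMul K ω₁ ω₂ hd p q x y) =
      ctCast K (ω₁ ∪ ω₂) (Nat.succ_add p q)
        (ctMul K ω₁ ω₂ hd (p + 1) q (dCt K ω₁ p x) y) +
      ((-1 : ℤ) ^ p) • ctCast K (ω₁ ∪ ω₂) (Nat.add_succ p q)
        (ctMul K ω₁ ω₂ hd p (q + 1) x (dCt K ω₂ q y)) := by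
  induction x using Finsupp.induction_linear with
  | zero => simp
  | add f g hf hg =>
    simp only [map_add, LinearMap.add_apply, hf, hg, smul_add]
    abel
  | single a c =>
    induction y using Finsupp.induction_linear with
    | zero => simp
    | add f g hf hg =>
      simp only [map_add, hf, hg, smul_add]
      abel
    | single a' c' =>
      have e1 : (Finsupp.single a c : CtB K ω₁ p →₀ ℤ) = c • Finsupp.single a 1 := by
        rw [Finsupp.smul_single, smul_eq_mul, mul_one]
      have e2 : (Finsupp.single a' c' : CtB K ω₂ q →₀ ℤ) = c' • Finsupp.single a' 1 := by
        rw [Finsupp.smul_single, smul_eq_mul, mul_one]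
      rw [e1, e2]
      simp only [map_smul, LinearMap.smul_apply]
      rw [show ctMul K ω₁ ω₂ hd p q (Finsupp.single a 1) (Finsupp.single a' 1)
            = ctMulAux K ω₁ ω₂ hd a a' from by rw [ctMul_single_single, one_mul, one_smul],
        show dCt K ω₁ p (Finsupp.single a 1) = dCtaux K ω₁ p a from by
          rw [dCt_single, one_smul],
        show dCt K ω₂ q (Finsupp.single a' 1) = dCtaux K ω₂ q a' from by
          rw [dCt_single, one_smul],
        leibniz_single K hKdown ω₁ ω₂ hd p q a a']
      module

theorem mul_ker_mem (K : Finset (Finset (Fin m)))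
    (hKdown : ∀ σ ∈ K, ∀ τ ⊆ σ, τ ∈ K)
    (ω₁ ω₂ : Finset (Fin m)) (hd : Disjoint ω₁ ω₂) (p q : ℕ)
    (x : CtB K ω₁ p →₀ ℤ) (y : CtB K ω₂ q →₀ ℤ)
    (hx : dCt K ω₁ p x = 0) (hy : dCt K ω₂ q y = 0) :
    dCt K (ω₁ ∪ ω₂) (p + q) (ctMul K ω₁ ω₂ hd p q x y) = 0 := by
  rw [leibniz_all K hKdown ω₁ ω₂ hd p q x y, hx, hy]
  simp

theorem mul_boundary_left (K : Finset (Finset (Fin m)))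
    (hKdown : ∀ σ ∈ K, ∀ τ ⊆ σ, τ ∈ K)
    (ω₁ ω₂ : Finset (Fin m)) (hd : Disjoint ω₁ ω₂) (p q : ℕ)
    (x : CtB K ω₁ p →₀ ℤ) (y : CtB K ω₂ q →₀ ℤ)
    (hx : x ∈ prevRange (dCt K ω₁) p) (hy : dCt K ω₂ q y = 0) :
    ctMul K ω₁ ω₂ hd p q x y ∈ prevRange (dCt K (ω₁ ∪ ω₂)) (p + q) := by
  cases p with
  | zero =>
    have hx0 : x = 0 := by simpa [prevRange] using hx
    rw [hx0, map_zero, LinearMap.zero_apply]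
    exact zero_mem _
  | succ p' =>
    rw [prevRange_succ] at hx
    obtain ⟨x', hx'⟩ := hx
    have hx'' : dCt K ω₁ p' x' = x := hx'
    have hL := leibniz_all K hKdown ω₁ ω₂ hd p' q x' y
    rw [hx'', hy, map_zero, map_zero, smul_zero, add_zero] at hL
    rw [mem_prevRange_iff K (ω₁ ∪ ω₂) (Nat.succ_add p' q), prevRange_succ]
    exact ⟨ctMul K ω₁ ω₂ hd p' q x' y, hL⟩

theorem mul_boundary_right (K : Finset (Finset (Fin m)))
    (hKdown : ∀ σ ∈ K, ∀ τ ⊆ σ, τ ∈ K)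
    (ω₁ ω₂ : Finset (Fin m)) (hd : Disjoint ω₁ ω₂) (p q : ℕ)
    (x : CtB K ω₁ p →₀ ℤ) (y : CtB K ω₂ q →₀ ℤ)
    (hx : dCt K ω₁ p x = 0) (hy : y ∈ prevRange (dCt K ω₂) q) :
    ctMul K ω₁ ω₂ hd p q x y ∈ prevRange (dCt K (ω₁ ∪ ω₂)) (p + q) := by
  cases q with
  | zero =>
    have hy0 : y = 0 := by simpa [prevRange] using hy
    rw [hy0, map_zero]
    exact zero_mem _
  | succ q' =>
    rw [prevRange_succ] at hy
    obtain ⟨y', hy'⟩ := hy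
    have hy'' : dCt K ω₂ q' y' = y := hy'
    have hL := leibniz_all K hKdown ω₁ ω₂ hd p q' x y'
    rw [hx, map_zero, LinearMap.zero_apply, map_zero, zero_add, hy''] at hL
    have key : ctCast K (ω₁ ∪ ω₂) (Nat.add_succ p q') (ctMul K ω₁ ω₂ hd p (q' + 1) x y)
        = dCt K (ω₁ ∪ ω₂) (p + q') (((-1 : ℤ) ^ p) • ctMul K ω₁ ω₂ hd p q' x y') := by
      rw [map_smul, hL, smul_smul, ← pow_add, Even.neg_one_pow ⟨p, rfl⟩, one_smul]
    rw [mem_prevRange_iff K (ω₁ ∪ ω₂) (Nat.add_succ p q'), prevRange_succ]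
    exact ⟨((-1 : ℤ) ^ p) • ctMul K ω₁ ω₂ hd p q' x y', key.symm⟩

end Hochster3

/-- The cochain-level product satisfies the graded Leibniz rule, and induces a product
on reduced simplicial cohomology `H̃^{p−1}(K_{ω₁}) ⊗ H̃^{q−1}(K_{ω₂}) → H̃^{p+q−1}(K_{ω₁∪ω₂})`. -/
theorem ctMul_leibniz_and_induced_product {m : ℕ} (K : Finset (Finset (Fin m)))
    (hKempty : (∅ : Finset (Fin m)) ∈ K)
    (hKdown : ∀ σ ∈ K, ∀ τ ⊆ σ, τ ∈ K)
    (ω₁ ω₂ : Finset (Fin m)) (hd : Disjoint ω₁ ω₂) :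
    (∀ (p q : ℕ) (x : CtB K ω₁ p →₀ ℤ) (y : CtB K ω₂ q →₀ ℤ),
      dCt K (ω₁ ∪ ω₂) (p + q) (ctMul K ω₁ ω₂ hd p q x y) =
        ctCast K (ω₁ ∪ ω₂) (Nat.succ_add p q)
          (ctMul K ω₁ ω₂ hd (p + 1) q (dCt K ω₁ p x) y) +
        ((-1 : ℤ) ^ p) • ctCast K (ω₁ ∪ ω₂) (Nat.add_succ p q)
          (ctMul K ω₁ ω₂ hd p (q + 1) x (dCt K ω₂ q y))) ∧
    (∀ p q : ℕ,
      ∃ P : Hgrp (dCt K ω₁) p →+ Hgrp (dCt K ω₂) q →+ Hgrp (dCt K (ω₁ ∪ ω₂)) (p + q),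
        ∀ (x : CtB K ω₁ p →₀ ℤ) (y : CtB K ω₂ q →₀ ℤ)
          (hx : x ∈ (dCt K ω₁ p).toAddMonoidHom.ker)
          (hy : y ∈ (dCt K ω₂ q).toAddMonoidHom.ker)
          (hxy : ctMul K ω₁ ω₂ hd p q x y ∈
            (dCt K (ω₁ ∪ ω₂) (p + q)).toAddMonoidHom.ker),
          P (QuotientAddGroup.mk ⟨x, hx⟩) (QuotientAddGroup.mk ⟨y, hy⟩) =
            QuotientAddGroup.mk ⟨ctMul K ω₁ ω₂ hd p q x y, hxy⟩) := by
  refine ⟨fun p q x y => leibniz_all K hKdown ω₁ ω₂ hd p q x y, ?_⟩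
  intro p q
  have hker : ∀ (x : CtB K ω₁ p →₀ ℤ) (y : CtB K ω₂ q →₀ ℤ),
      x ∈ (dCt K ω₁ p).toAddMonoidHom.ker → y ∈ (dCt K ω₂ q).toAddMonoidHom.ker →
      ctMul K ω₁ ω₂ hd p q x y ∈ (dCt K (ω₁ ∪ ω₂) (p + q)).toAddMonoidHom.ker :=
    fun x y hx hy => AddMonoidHom.mem_ker.mpr
      (mul_ker_mem K hKdown ω₁ ω₂ hd p q x y
        (AddMonoidHom.mem_ker.mp hx) (AddMonoidHom.mem_ker.mp hy))
  set Z₁ := (dCt K ω₁ p).toAddMonoidHom.ker with hZ₁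
  set Z₂ := (dCt K ω₂ q).toAddMonoidHom.ker with hZ₂
  let f : ∀ _x : Z₁, Z₂ →+ Hgrp (dCt K (ω₁ ∪ ω₂)) (p + q) := fun x =>
    AddMonoidHom.mk'
      (fun y => QuotientAddGroup.mk ⟨ctMul K ω₁ ω₂ hd p q x.1 y.1, hker x.1 y.1 x.2 y.2⟩)
      (by
        intro y y'
        rw [← QuotientAddGroup.mk_add]
        exact congrArg QuotientAddGroup.mk
          (Subtype.ext (map_add (ctMul K ω₁ ω₂ hd p q x.1) y.1 y'.1)))
  let g : ∀ _x : Z₁, Hgrp (dCt K ω₂) q →+ Hgrp (dCt K (ω₁ ∪ ω₂)) (p + q) := fun x =>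
    QuotientAddGroup.lift _ (f x) (by
      intro y hy
      rw [AddMonoidHom.mem_ker]
      show QuotientAddGroup.mk _ = 0
      rw [QuotientAddGroup.eq_zero_iff, AddSubgroup.mem_addSubgroupOf]
      exact mul_boundary_right K hKdown ω₁ ω₂ hd p q x.1 y.1
        (AddMonoidHom.mem_ker.mp x.2) (AddSubgroup.mem_addSubgroupOf.mp hy))
  have gadd : ∀ x x' : Z₁, g (x + x') = g x + g x' := by
    intro x x'
    refine AddMonoidHom.ext fun z => ?_
    refine QuotientAddGroup.induction_on z fun y => ?_
    show g (x + x') (QuotientAddGroup.mk y) = g x (QuotientAddGroup.mk y) +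
      g x' (QuotientAddGroup.mk y)
    show (f (x + x')) y = (f x) y + (f x') y
    show QuotientAddGroup.mk _ = QuotientAddGroup.mk _ + QuotientAddGroup.mk _
    rw [← QuotientAddGroup.mk_add]
    refine congrArg QuotientAddGroup.mk (Subtype.ext ?_)
    show ctMul K ω₁ ω₂ hd p q (x.1 + x'.1) y.1 = _
    rw [map_add, LinearMap.add_apply]
    rfl
  refine ⟨QuotientAddGroup.lift _ (AddMonoidHom.mk' g gadd) ?_, ?_⟩
  · intro x hx
    rw [AddMonoidHom.mem_ker]
    refine AddMonoidHom.ext fun z => ?_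
    refine QuotientAddGroup.induction_on z fun y => ?_
    show (f x) y = 0
    show QuotientAddGroup.mk _ = 0
    rw [QuotientAddGroup.eq_zero_iff, AddSubgroup.mem_addSubgroupOf]
    exact mul_boundary_left K hKdown ω₁ ω₂ hd p q x.1 y.1
      (AddSubgroup.mem_addSubgroupOf.mp hx) (AddMonoidHom.mem_ker.mp y.2)
  · intro x y hx hy hxy
    rfl
end
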